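/- Let f̃: ℂ^M → ℝ (viewed as a function on ℝ^{2M}) be given by f̃(x) = μ₁(xᴴx)² + μ₂(xᴴx) + α₀ xᴴDx + Σ_{j=1}^{J} α_j xᴴA_j x · xᴴB_jᴴ x, with D Hermitian and, for each j, either A_j, B_j Hermitian or A_j = B_j. If μ₂ I + α₀ D ⪰ 0 and for all unit vectors y, z ∈ ℂ^M one has μ₁(2‖y‖²‖z‖² + (yᴴz + zᴴy)²) + Σ_j α_j h(y,z,A_j,B_j) ≥ 0 where h is the symmetrized sixfold cross form h(y,z,A,B) = yᴴAy·zᴴBᴴz + yᴴAz·yᴴBᴴz + yᴴAz·zᴴBᴴy + zᴴAy·yᴴBᴴz + zᴴAy·zᴴBᴴy + zᴴAz·yᴴBᴴy, then f̃ is convex on ℂ^M. -/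

import Mathlib

open Matrix ComplexOrder
open scoped BigOperators

/-- The symmetrized sixfold cross form h(y,z,A,B). -/
noncomputable def crossForm (M : ℕ) (y z : Fin M → ℂ)
    (A B : Matrix (Fin M) (Fin M) ℂ) : ℂ :=
  dotProduct (star y) (A.mulVec y) * dotProduct (star z) (Bᴴ.mulVec z) +
  dotProduct (star y) (A.mulVec z) * dotProduct (star y) (Bᴴ.mulVec z) +
  dotProduct (star y) (A.mulVec z) * dotProduct (star z) (Bᴴ.mulVec y) +
  dotProduct (star z) (A.mulVec y) * dotProduct (star y) (Bᴴ.mulVec z) +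
  dotProduct (star z) (A.mulVec y) * dotProduct (star z) (Bᴴ.mulVec y) +
  dotProduct (star z) (A.mulVec z) * dotProduct (star y) (Bᴴ.mulVec y)

variable {M : ℕ}

/-- quadratic form value -/
noncomputable def qf (C : Matrix (Fin M) (Fin M) ℂ) (u v : Fin M → ℂ) : ℂ :=
  dotProduct (star u) (C.mulVec v)

noncomputable def pf (u v : Fin M → ℂ) : ℂ := dotProduct (star u) v

lemma pf_left (u v x : Fin M → ℂ) (t : ℝ) :
    pf (u + (t:ℂ) • v) x = pf u x + (t:ℂ) * pf v x := by
  simp [pf, star_add, star_smul, add_dotProduct, smul_dotProduct,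
    Complex.star_def, Complex.conj_ofReal, smul_eq_mul]

lemma pf_right (x u v : Fin M → ℂ) (t : ℝ) :
    pf x (u + (t:ℂ) • v) = pf x u + (t:ℂ) * pf x v := by
  simp [pf, dotProduct_add, dotProduct_smul, smul_eq_mul]

lemma qf_left (C : Matrix (Fin M) (Fin M) ℂ) (u v x : Fin M → ℂ) (t : ℝ) :
    qf C (u + (t:ℂ) • v) x = qf C u x + (t:ℂ) * qf C v x := by
  simp [qf, star_add, star_smul, add_dotProduct, smul_dotProduct,
    Complex.star_def, Complex.conj_ofReal, smul_eq_mul]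

lemma qf_right (C : Matrix (Fin M) (Fin M) ℂ) (x u v : Fin M → ℂ) (t : ℝ) :
    qf C x (u + (t:ℂ) • v) = qf C x u + (t:ℂ) * qf C x v := by
  simp [qf, Matrix.mulVec_add, Matrix.mulVec_smul, dotProduct_add,
    dotProduct_smul, smul_eq_mul]

lemma qf_smul_left (C : Matrix (Fin M) (Fin M) ℂ) (u v : Fin M → ℂ) (c : ℝ) :
    qf C ((c:ℂ) • u) v = (c:ℂ) * qf C u v := by
  simp [qf, star_smul, smul_dotProduct, Complex.star_def, Complex.conj_ofReal,
    smul_eq_mul]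

lemma qf_smul_right (C : Matrix (Fin M) (Fin M) ℂ) (u v : Fin M → ℂ) (c : ℝ) :
    qf C u ((c:ℂ) • v) = (c:ℂ) * qf C u v := by
  simp [qf, Matrix.mulVec_smul, dotProduct_smul, smul_eq_mul]

lemma crossForm_eq (y z : Fin M → ℂ) (A B : Matrix (Fin M) (Fin M) ℂ) :
    crossForm M y z A B =
      qf A y y * qf Bᴴ z z + qf A y z * qf Bᴴ y z + qf A y z * qf Bᴴ z y +
      qf A z y * qf Bᴴ y z + qf A z y * qf Bᴴ z y + qf A z z * qf Bᴴ y y := rfl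

lemma crossForm_smul (y z : Fin M → ℂ) (A B : Matrix (Fin M) (Fin M) ℂ) (c e : ℝ) :
    crossForm M ((c:ℂ) • y) ((e:ℂ) • z) A B
      = ((c^2 * e^2 : ℝ) : ℂ) * crossForm M y z A B := by
  simp only [crossForm_eq, qf_smul_left, qf_smul_right]
  push_cast
  ring

lemma crossForm_zero_left (z : Fin M → ℂ) (A B : Matrix (Fin M) (Fin M) ℂ) :
    crossForm M 0 z A B = 0 := by
  simp [crossForm]

lemma crossForm_zero_right (y : Fin M → ℂ) (A B : Matrix (Fin M) (Fin M) ℂ) :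
    crossForm M y 0 A B = 0 := by
  simp [crossForm]

lemma pf_self (y : Fin M → ℂ) :
    pf y y = ((∑ i, ‖y i‖ ^ 2 : ℝ) : ℂ) := by
  simp only [pf, dotProduct, Pi.star_apply, Complex.star_def, Complex.ofReal_sum]
  refine Finset.sum_congr rfl fun i _ => ?_
  rw [mul_comm, Complex.mul_conj, Complex.sq_norm]

lemma pf_smul_left (u v : Fin M → ℂ) (c : ℝ) :
    pf ((c:ℂ) • u) v = (c:ℂ) * pf u v := by
  simp [pf, star_smul, smul_dotProduct, Complex.star_def, Complex.conj_ofReal,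
    smul_eq_mul]

lemma pf_smul_right (u v : Fin M → ℂ) (c : ℝ) :
    pf u ((c:ℂ) • v) = (c:ℂ) * pf u v := by
  simp [pf, dotProduct_smul, smul_eq_mul]

lemma pf_conj (y z : Fin M → ℂ) : pf z y = (starRingEnd ℂ) (pf y z) := by
  simp only [pf, dotProduct, Pi.star_apply, Complex.star_def, map_sum,
    _root_.map_mul, Complex.conj_conj]
  exact Finset.sum_congr rfl fun i _ => mul_comm _ _

lemma pf_add_conj (y z : Fin M → ℂ) :
    pf y z + pf z y = ((2 * (dotProduct (star y) z).re : ℝ) : ℂ) := by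
  rw [pf_conj y z, Complex.add_conj]
  push_cast
  rfl

lemma sum_abs_smul (y : Fin M → ℂ) (c : ℝ) :
    ∑ i, ‖((c:ℂ) • y) i‖ ^ 2 = c^2 * ∑ i, ‖y i‖ ^ 2 := by
  rw [Finset.mul_sum]
  refine Finset.sum_congr rfl fun i _ => ?_
  simp [Pi.smul_apply, smul_eq_mul, _root_.map_mul, mul_pow, Complex.norm_real, sq_abs]

lemma key_ineq (M J : ℕ) (μ₁ : ℝ) (α : Fin J → ℝ)
    (A B : Fin J → Matrix (Fin M) (Fin M) ℂ)
    (hineq : ∀ y z : Fin M → ℂ,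
      (∑ i, ‖y i‖ ^ 2 = 1) → (∑ i, ‖z i‖ ^ 2 = 1) →
      0 ≤ μ₁ * (2 * (∑ i, ‖y i‖ ^ 2) * (∑ i, ‖z i‖ ^ 2) +
            (2 * (dotProduct (star y) z).re) ^ 2) +
          ∑ j, α j * (crossForm M y z (A j) (B j)).re) :
    ∀ y z : Fin M → ℂ,
      0 ≤ μ₁ * (2 * (∑ i, ‖y i‖ ^ 2) * (∑ i, ‖z i‖ ^ 2) +
            (2 * (dotProduct (star y) z).re) ^ 2) +
          ∑ j, α j * (crossForm M y z (A j) (B j)).re := by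
  intro y z
  have habs : ∀ w : Fin M → ℂ, (0:ℝ) ≤ ∑ i, ‖w i‖ ^ 2 :=
    fun w => Finset.sum_nonneg fun i _ => sq_nonneg _
  by_cases hy : ∑ i, ‖y i‖ ^ 2 = 0
  · have hy0 : y = 0 := by
      funext i
      have := (Finset.sum_eq_zero_iff_of_nonneg (fun i _ => sq_nonneg (‖y i‖))).mp
        hy i (Finset.mem_univ i)
      have : ‖y i‖ = 0 := by nlinarith [norm_nonneg (y i)]
      simpa using this
    subst hy0
    simp [crossForm_zero_left, hy]
  by_cases hz : ∑ i, ‖z i‖ ^ 2 = 0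
  · have hz0 : z = 0 := by
      funext i
      have := (Finset.sum_eq_zero_iff_of_nonneg (fun i _ => sq_nonneg (‖z i‖))).mp
        hz i (Finset.mem_univ i)
      have : ‖z i‖ = 0 := by nlinarith [norm_nonneg (z i)]
      simpa using this
    subst hz0
    simp [crossForm_zero_right, hz]
  have hy' : 0 < ∑ i, ‖y i‖ ^ 2 := lt_of_le_of_ne (habs y) (Ne.symm hy)
  have hz' : 0 < ∑ i, ‖z i‖ ^ 2 := lt_of_le_of_ne (habs z) (Ne.symm hz)
  set c : ℝ := (Real.sqrt (∑ i, ‖y i‖ ^ 2))⁻¹ with hc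
  set e : ℝ := (Real.sqrt (∑ i, ‖z i‖ ^ 2))⁻¹ with he
  have hcsq : c^2 * (∑ i, ‖y i‖ ^ 2) = 1 := by
    rw [hc, inv_pow, Real.sq_sqrt (habs y)]
    · exact inv_mul_cancel₀ hy
  have hesq : e^2 * (∑ i, ‖z i‖ ^ 2) = 1 := by
    rw [he, inv_pow, Real.sq_sqrt (habs z)]
    · exact inv_mul_cancel₀ hz
  have hcpos : 0 < c^2 := pow_pos (inv_pos.mpr (Real.sqrt_pos.mpr hy')) 2
  have hepos : 0 < e^2 := pow_pos (inv_pos.mpr (Real.sqrt_pos.mpr hz')) 2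
  have h1 := hineq ((c:ℂ) • y) ((e:ℂ) • z)
    (by rw [sum_abs_smul]; exact hcsq) (by rw [sum_abs_smul]; exact hesq)
  have hdot : dotProduct (star ((c:ℂ) • y)) ((e:ℂ) • z)
      = ((c*e : ℝ):ℂ) * dotProduct (star y) z := by
    show pf ((c:ℂ) • y) ((e:ℂ) • z) = ((c*e : ℝ):ℂ) * pf y z
    rw [pf_smul_left, pf_smul_right]
    push_cast
    ring
  rw [sum_abs_smul, sum_abs_smul, hdot] at h1
  have hcross : ∀ j, (crossForm M ((c:ℂ) • y) ((e:ℂ) • z) (A j) (B j)).re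
      = c^2*e^2 * (crossForm M y z (A j) (B j)).re := by
    intro j
    rw [crossForm_smul, Complex.re_ofReal_mul]
  simp only [hcross, Complex.re_ofReal_mul] at h1
  have expand : (c^2*e^2) *
      (μ₁ * (2 * (∑ i, ‖y i‖ ^ 2) * (∑ i, ‖z i‖ ^ 2) +
            (2 * (dotProduct (star y) z).re) ^ 2) +
          ∑ j, α j * (crossForm M y z (A j) (B j)).re)
      = μ₁ * (2 * (c^2 * ∑ i, ‖y i‖ ^ 2) * (e^2 * ∑ i, ‖z i‖ ^ 2) +
            (2 * (c * e * (dotProduct (star y) z).re)) ^ 2) +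
          ∑ j, α j * (c^2*e^2 * (crossForm M y z (A j) (B j)).re) := by
    rw [mul_add]
    congr 1
    · ring
    · rw [Finset.mul_sum]
      exact Finset.sum_congr rfl fun j _ => by ring
  have h2 : 0 ≤ (c^2*e^2) *
      (μ₁ * (2 * (∑ i, ‖y i‖ ^ 2) * (∑ i, ‖z i‖ ^ 2) +
            (2 * (dotProduct (star y) z).re) ^ 2) +
          ∑ j, α j * (crossForm M y z (A j) (B j)).re) := by
    rw [expand]
    exact h1
  exact (mul_nonneg_iff_of_pos_left (mul_pos hcpos hepos)).mp h2

lemma slice_spec (M J : ℕ) (μ₁ μ₂ α₀ : ℝ) (α : Fin J → ℝ)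
    (D : Matrix (Fin M) (Fin M) ℂ) (A B : Fin J → Matrix (Fin M) (Fin M) ℂ)
    (ftilde : (Fin M → ℂ) → ℝ)
    (hf : ∀ x : Fin M → ℂ, (ftilde x : ℂ) =
      (μ₁:ℂ) * (pf x x)^2 + (μ₂:ℂ) * pf x x + (α₀:ℂ) * qf D x x +
      ∑ j, (α j : ℂ) * qf (A j) x x * qf ((B j)ᴴ) x x)
    (w d : Fin M → ℂ) :
    ∃ C0 C1 C2 C3 C4 : ℂ,
      (∀ t : ℝ, (ftilde (w + (t:ℂ) • d) : ℂ) =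
          C0 + C1 * (t:ℂ) + C2 * (t:ℂ)^2 + C3 * (t:ℂ)^3 + C4 * (t:ℂ)^4) ∧
      (∀ t : ℝ, 2*C2 + 6*C3*(t:ℂ) + 12*C4*(t:ℂ)^2
        = 2*((μ₂:ℂ) * pf d d + (α₀:ℂ) * qf D d d)
          + 2*(μ₁:ℂ)*(2 * pf d d * pf (w + (t:ℂ) • d) (w + (t:ℂ) • d) + (pf d (w + (t:ℂ) • d) + pf (w + (t:ℂ) • d) d)^2)
          + 2*∑ j, (α j : ℂ) * crossForm M d (w + (t:ℂ) • d) (A j) (B j)) := by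
  refine ⟨((μ₁:ℂ) * (pf w w)^2 + (μ₂:ℂ) * pf w w + (α₀:ℂ) * qf D w w + (∑ j, (α j : ℂ) * (qf (A j) w w * qf ((B j)ᴴ) w w))), ((μ₁:ℂ) * (2 * pf w w * (pf w d + pf d w)) + (μ₂:ℂ) * (pf w d + pf d w) + (α₀:ℂ) * (qf D w d + qf D d w) + (∑ j, (α j : ℂ) * (qf (A j) w w * (qf ((B j)ᴴ) w d + qf ((B j)ᴴ) d w) + (qf (A j) w d + qf (A j) d w) * qf ((B j)ᴴ) w w))), ((μ₁:ℂ) * ((pf w d + pf d w)^2 + 2 * pf w w * pf d d) + (μ₂:ℂ) * pf d d + (α₀:ℂ) * qf D d d + (∑ j, (α j : ℂ) * (qf (A j) w w * qf ((B j)ᴴ) d d + (qf (A j) w d + qf (A j) d w) * (qf ((B j)ᴴ) w d + qf ((B j)ᴴ) d w) + qf (A j) d d * qf ((B j)ᴴ) w w))), ((μ₁:ℂ) * (2 * (pf w d + pf d w) * pf d d) + (∑ j, (α j : ℂ) * ((qf (A j) w d + qf (A j) d w) * qf ((B j)ᴴ) d d + qf (A j) d d * (qf ((B j)ᴴ) w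 d + qf ((B j)ᴴ) d w)))), ((μ₁:ℂ) * (pf d d)^2 + (∑ j, (α j : ℂ) * (qf (A j) d d * qf ((B j)ᴴ) d d))), fun t => ?_, fun t => ?_⟩
  · rw [hf]
    have hsum : ∑ j, (α j : ℂ) * qf (A j) (w + (t:ℂ) • d) (w + (t:ℂ) • d) * qf ((B j)ᴴ) (w + (t:ℂ) • d) (w + (t:ℂ) • d)
        = (∑ j, (α j : ℂ) * (qf (A j) w w * qf ((B j)ᴴ) w w)) + (t:ℂ) * (∑ j, (α j : ℂ) * (qf (A j) w w * (qf ((B j)ᴴ) w d + qf ((B j)ᴴ) d w) + (qf (A j) w d + qf (A j) d w) * qf ((B j)ᴴ) w w)) + (t:ℂ)^2 * (∑ j, (α j : ℂ) * (qf (A j) w w * qf ((B j)ᴴ) d d + (qf (A j) w d + qf (A j) d w) * (qf ((B j)ᴴ) w d + qf ((B j)ᴴ) d w) + qf (A j) d d * qf ((B j)ᴴ) w w))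
          + (t:ℂ)^3 * (∑ j, (α j : ℂ) * ((qf (A j) w d + qf (A j) d w) * qf ((B j)ᴴ) d d + qf (A j) d d * (qf ((B j)ᴴ) w d + qf ((B j)ᴴ) d w))) + (t:ℂ)^4 * (∑ j, (α j : ℂ) * (qf (A j) d d * qf ((B j)ᴴ) d d)) := by
      simp only [Finset.mul_sum]
      rw [← Finset.sum_add_distrib, ← Finset.sum_add_distrib, ← Finset.sum_add_distrib,
        ← Finset.sum_add_distrib]
      refine Finset.sum_congr rfl fun j _ => ?_
      simp only [qf_left, qf_right]
      ring
    rw [hsum]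
    simp only [pf_left, pf_right, qf_left, qf_right]
    ring
  · have hsum : ∑ j, (α j : ℂ) * crossForm M d (w + (t:ℂ) • d) (A j) (B j)
        = (∑ j, (α j : ℂ) * (qf (A j) w w * qf ((B j)ᴴ) d d + (qf (A j) w d + qf (A j) d w) * (qf ((B j)ᴴ) w d + qf ((B j)ᴴ) d w) + qf (A j) d d * qf ((B j)ᴴ) w w)) + (3*(t:ℂ)) * (∑ j, (α j : ℂ) * ((qf (A j) w d + qf (A j) d w) * qf ((B j)ᴴ) d d + qf (A j) d d * (qf ((B j)ᴴ) w d + qf ((B j)ᴴ) d w))) + (6*(t:ℂ)^2) * (∑ j, (α j : ℂ) * (qf (A j) d d * qf ((B j)ᴴ) d d)) := by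
      simp only [Finset.mul_sum]
      rw [← Finset.sum_add_distrib, ← Finset.sum_add_distrib]
      refine Finset.sum_congr rfl fun j _ => ?_
      simp only [crossForm_eq, qf_left, qf_right]
      ring
    rw [hsum]
    simp only [pf_left, pf_right]
    ring

lemma re_helper (C2 C3 C4 R : ℂ) (t : ℝ)
    (h : 2*C2 + 6*C3*(t:ℂ) + 12*C4*(t:ℂ)^2 = R) :
    2*C2.re + 6*C3.re*t + 12*C4.re*t^2 = R.re := by
  rw [← h]
  simp [Complex.add_re, Complex.mul_re, Complex.re_ofNat, Complex.im_ofNat,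
    Complex.ofReal_re, Complex.ofReal_im, Complex.mul_im, pow_two]

lemma reRHS (M J : ℕ) (μ₁ μ₂ α₀ : ℝ) (α : Fin J → ℝ) (D : Matrix (Fin M) (Fin M) ℂ)
    (A B : Fin J → Matrix (Fin M) (Fin M) ℂ) (d z : Fin M → ℂ) :
    (2*((μ₂:ℂ) * pf d d + (α₀:ℂ) * qf D d d)
      + 2*(μ₁:ℂ)*(2 * pf d d * pf z z + (pf d z + pf z d)^2)
      + 2*∑ j, (α j : ℂ) * crossForm M d z (A j) (B j)).re
    = 2*((μ₂:ℂ) * pf d d + (α₀:ℂ) * qf D d d).re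
      + 2*(μ₁ * (2 * (∑ i, ‖d i‖^2) * (∑ i, ‖z i‖^2)
          + (2*(dotProduct (star d) z).re)^2))
      + 2*(∑ j, α j * (crossForm M d z (A j) (B j)).re) := by
  rw [pf_add_conj d z, pf_self d, pf_self z]
  simp [Complex.add_re, Complex.mul_re, Complex.re_ofNat, Complex.im_ofNat,
    Complex.ofReal_re, Complex.ofReal_im, Complex.add_im, Complex.mul_im,
    Complex.re_sum, Complex.im_sum, pow_two]
  ring

lemma convex_aux (f : ℝ → ℝ) (r0 r1 r2 r3 r4 : ℝ)
    (hf : ∀ t, f t = r0 + r1*t + r2*t^2 + r3*t^3 + r4*t^4)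
    (h2 : ∀ t, 0 ≤ 2*r2 + 6*r3*t + 12*r4*t^2) : ConvexOn ℝ Set.univ f := by
  have hfe : f = fun t => r0 + r1*t + r2*t^2 + r3*t^3 + r4*t^4 := funext hf
  rw [hfe]
  have H1 : ∀ x : ℝ, HasDerivAt (fun t : ℝ => r0 + r1*t + r2*t^2 + r3*t^3 + r4*t^4)
      (r1 + 2*r2*x + 3*r3*x^2 + 4*r4*x^3) x := by
    intro x
    have h := ((((hasDerivAt_const x r0).add ((hasDerivAt_id x).const_mul r1)).add
      ((hasDerivAt_pow 2 x).const_mul r2)).add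
      ((hasDerivAt_pow 3 x).const_mul r3)).add ((hasDerivAt_pow 4 x).const_mul r4)
    convert h using 1
    norm_num
    case e'_9 => norm_num; ring
    all_goals rfl
  have H2 : ∀ x : ℝ, HasDerivAt (fun t : ℝ => r1 + 2*r2*t + 3*r3*t^2 + 4*r4*t^3)
      (2*r2 + 6*r3*x + 12*r4*x^2) x := by
    intro x
    have h := (((hasDerivAt_const x r1).add ((hasDerivAt_id x).const_mul (2*r2))).add
      ((hasDerivAt_pow 2 x).const_mul (3*r3))).add ((hasDerivAt_pow 3 x).const_mul (4*r4))
    convert h using 1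
    norm_num
    case e'_9 => norm_num; ring
    all_goals rfl
  refine convexOn_of_hasDerivWithinAt2_nonneg convex_univ
    (f' := fun t => r1 + 2*r2*t + 3*r3*t^2 + 4*r4*t^3)
    (f'' := fun t => 2*r2 + 6*r3*t + 12*r4*t^2)
    (Continuous.continuousOn (by continuity))
    (fun x _ => (H1 x).hasDerivWithinAt)
    (fun x _ => (H2 x).hasDerivWithinAt)
    (fun x _ => h2 x)

lemma convexOn_of_slices {E : Type*} [AddCommGroup E] [Module ℝ E] (f : E → ℝ)
    (h : ∀ x y : E, ConvexOn ℝ Set.univ (fun t : ℝ => f (x + t • (y - x)))) :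
    ConvexOn ℝ Set.univ f := by
  refine ⟨convex_univ, fun x _ y _ a b ha hb hab => ?_⟩
  have hc := (h x y).2 (Set.mem_univ (0:ℝ)) (Set.mem_univ (1:ℝ)) ha hb hab
  simp only [smul_eq_mul, mul_zero, mul_one, zero_add] at hc
  have e0 : x + (0:ℝ) • (y - x) = x := by simp
  have e1 : x + (1:ℝ) • (y - x) = y := by simp
  have eb : x + b • (y - x) = a • x + b • y := by
    have ha' : a = 1 - b := by linarith
    rw [ha', smul_sub, sub_smul, one_smul]
    abel
  rw [e0, e1, eb] at hc
  exact hc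

theorem stmt15 (M J : ℕ) (μ₁ μ₂ α₀ : ℝ) (α : Fin J → ℝ)
    (D : Matrix (Fin M) (Fin M) ℂ) (hD : D.IsHermitian)
    (A B : Fin J → Matrix (Fin M) (Fin M) ℂ)
    (hAB : ∀ j, ((A j).IsHermitian ∧ (B j).IsHermitian) ∨ A j = B j)
    (ftilde : (Fin M → ℂ) → ℝ)
    (hf : ∀ x : Fin M → ℂ, (ftilde x : ℂ) =
      (μ₁ : ℂ) * (dotProduct (star x) x) ^ 2 +
      (μ₂ : ℂ) * (dotProduct (star x) x) +
      (α₀ : ℂ) * dotProduct (star x) (D.mulVec x) +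
      ∑ j, (α j : ℂ) * dotProduct (star x) ((A j).mulVec x) *
        dotProduct (star x) ((B j)ᴴ.mulVec x))
    (hpsd : ((μ₂ : ℂ) • (1 : Matrix (Fin M) (Fin M) ℂ) + (α₀ : ℂ) • D).PosSemidef)
    (hineq : ∀ y z : Fin M → ℂ,
      (∑ i, ‖y i‖ ^ 2 = 1) → (∑ i, ‖z i‖ ^ 2 = 1) →
      0 ≤ μ₁ * (2 * (∑ i, ‖y i‖ ^ 2) * (∑ i, ‖z i‖ ^ 2) +
            (2 * (dotProduct (star y) z).re) ^ 2) +
          ∑ j, α j * (crossForm M y z (A j) (B j)).re) :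
    ConvexOn ℝ Set.univ ftilde := by
  have hf' : ∀ x : Fin M → ℂ, (ftilde x : ℂ) =
      (μ₁:ℂ) * (pf x x)^2 + (μ₂:ℂ) * pf x x + (α₀:ℂ) * qf D x x +
      ∑ j, (α j : ℂ) * qf (A j) x x * qf ((B j)ᴴ) x x := hf
  have key := key_ineq M J μ₁ α A B hineq
  have hpsd' : ∀ v : Fin M → ℂ, 0 ≤ ((μ₂:ℂ) * pf v v + (α₀:ℂ) * qf D v v).re := by
    intro v
    have h := hpsd.dotProduct_mulVec_nonneg v
    have e : dotProduct (star v)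
        (((μ₂:ℂ) • (1 : Matrix (Fin M) (Fin M) ℂ) + (α₀:ℂ) • D).mulVec v)
        = (μ₂:ℂ) * pf v v + (α₀:ℂ) * qf D v v := by
      rw [Matrix.add_mulVec, Matrix.smul_mulVec, Matrix.smul_mulVec,
        Matrix.one_mulVec, dotProduct_add, dotProduct_smul,
        dotProduct_smul]
      simp [pf, qf, smul_eq_mul]
    rw [e] at h
    simpa using (Complex.le_def.mp h).1
  apply convexOn_of_slices
  intro x y
  have hfun : (fun t : ℝ => ftilde (x + t • (y - x)))
      = (fun t : ℝ => ftilde (x + (t:ℂ) • (y - x))) := by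
    funext t
    have hsm : (t • (y - x) : Fin M → ℂ) = (t:ℂ) • (y - x) := by
      funext i
      simp [Pi.smul_apply, Complex.real_smul]
    rw [hsm]
  rw [hfun]
  obtain ⟨C0, C1, C2, C3, C4, hpoly, hder⟩ := slice_spec M J μ₁ μ₂ α₀ α D A B ftilde hf' x (y - x)
  refine convex_aux _ C0.re C1.re C2.re C3.re C4.re (fun t => ?_) (fun t => ?_)
  · have h := congrArg Complex.re (hpoly t)
    simpa [Complex.add_re, Complex.mul_re, Complex.ofReal_re, Complex.ofReal_im,
      ← Complex.ofReal_pow] using h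
  · have h := re_helper C2 C3 C4 _ t (hder t)
    rw [reRHS M J μ₁ μ₂ α₀ α D A B (y - x) (x + (t:ℂ) • (y - x))] at h
    rw [h]
    have k := key (y - x) (x + (t:ℂ) • (y - x))
    have p := hpsd' (y - x)
    linarith
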